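/- arXiv:2410.22729 — 3 statements merged into one kernel-verified Lean document; each statement's English description precedes it below -/
import Mathlib

section
/- Let d ≥ 1 and let μ be a probability measure on ℝᵈ whose topological support is a finite set S. Then the following are equivalent: (i) the only real d×d matrix A such that the pushforward of μ under x ↦ exp(tA)·x equals μ for all t ≥ 0 is A = 0; (ii) the linear span of S is all of ℝᵈ. -/
open Matrix NormedSpace MeasureTheory

/-- The topological support of a measure: the set of points all of whose
neighborhoods have positive measure. -/
def measureSupport {α : Type*} [TopologicalSpace α] [MeasurableSpace α]
    (μ : Measure α) : Set α :=
  {x | ∀ U ∈ nhds x, 0 < μ U}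

section aux

variable {d : ℕ}

/-- If `A.mulVec x = 0` then `exp A` fixes `x`. -/
lemma exp_mulVec_fixed (A : Matrix (Fin d) (Fin d) ℝ) (x : Fin d → ℝ)
    (h : A.mulVec x = 0) : (exp A).mulVec x = x := by
  letI : SeminormedRing (Matrix (Fin d) (Fin d) ℝ) := Matrix.linftyOpSemiNormedRing
  letI : NormedRing (Matrix (Fin d) (Fin d) ℝ) := Matrix.linftyOpNormedRing
  letI : NormedAlgebra ℝ (Matrix (Fin d) (Fin d) ℝ) := Matrix.linftyOpNormedAlgebra
  letI : CompleteSpace (Matrix (Fin d) (Fin d) ℝ) := FiniteDimensional.complete ℝ _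
  have hpow : ∀ n : ℕ, n ≠ 0 → (A ^ n).mulVec x = 0 := by
    intro n hn
    obtain ⟨m, rfl⟩ := Nat.exists_eq_succ_of_ne_zero hn
    rw [pow_succ, ← Matrix.mulVec_mulVec, h, Matrix.mulVec_zero]
  let ev : Matrix (Fin d) (Fin d) ℝ →ₗ[ℝ] (Fin d → ℝ) :=
    { toFun := fun M => M.mulVec x
      map_add' := fun M N => Matrix.add_mulVec M N x
      map_smul' := fun c M => Matrix.smul_mulVec c M x }
  let evL : Matrix (Fin d) (Fin d) ℝ →L[ℝ] (Fin d → ℝ) := ev.toContinuousLinearMap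
  have hsum : Summable fun n : ℕ => ((n.factorial : ℝ))⁻¹ • A ^ n :=
    expSeries_summable' (𝕂 := ℝ) A
  calc (exp A).mulVec x = evL (exp A) := rfl
    _ = evL (∑' n : ℕ, ((n.factorial : ℝ))⁻¹ • A ^ n) := by rw [exp_eq_tsum ℝ]
    _ = ∑' n : ℕ, evL (((n.factorial : ℝ))⁻¹ • A ^ n) := evL.map_tsum hsum
    _ = evL (((Nat.factorial 0 : ℝ))⁻¹ • A ^ 0) := by
        refine tsum_eq_single 0 fun n hn => ?_
        rw [evL.map_smul]
        have hev : evL (A ^ n) = (A ^ n).mulVec x := rfl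
        rw [hev, hpow n hn, smul_zero]
    _ = x := by
        rw [evL.map_smul]
        have hev : evL (A ^ 0) = (A ^ 0).mulVec x := rfl
        rw [hev, pow_zero, Matrix.one_mulVec]
        simp

/-- If `exp (t • A)` fixes `x` for all `t ≥ 0`, then `A.mulVec x = 0`. -/
lemma mulVec_eq_zero_of_exp_fixed (A : Matrix (Fin d) (Fin d) ℝ) (x : Fin d → ℝ)
    (h : ∀ t : ℝ, 0 ≤ t → (exp (t • A)).mulVec x = x) : A.mulVec x = 0 := by
  letI : SeminormedRing (Matrix (Fin d) (Fin d) ℝ) := Matrix.linftyOpSemiNormedRing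
  letI : NormedRing (Matrix (Fin d) (Fin d) ℝ) := Matrix.linftyOpNormedRing
  letI : NormedAlgebra ℝ (Matrix (Fin d) (Fin d) ℝ) := Matrix.linftyOpNormedAlgebra
  letI : CompleteSpace (Matrix (Fin d) (Fin d) ℝ) := FiniteDimensional.complete ℝ _
  let ev : Matrix (Fin d) (Fin d) ℝ →ₗ[ℝ] (Fin d → ℝ) :=
    { toFun := fun M => M.mulVec x
      map_add' := fun M N => Matrix.add_mulVec M N x
      map_smul' := fun c M => Matrix.smul_mulVec c M x }
  let evL : Matrix (Fin d) (Fin d) ℝ →L[ℝ] (Fin d → ℝ) := ev.toContinuousLinearMap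
  have hG : HasDerivAt (fun t : ℝ => exp (t • A)) A 0 := by
    have := hasDerivAt_exp_smul_const' (𝕂 := ℝ) A 0
    rwa [zero_smul, exp_zero, mul_one] at this
  have hF : HasDerivAt (fun t : ℝ => (exp (t • A)).mulVec x) (A.mulVec x) 0 := by
    have := evL.hasFDerivAt.comp_hasDerivAt 0 hG
    exact this
  have h1 : HasDerivWithinAt (fun t : ℝ => (exp (t • A)).mulVec x)
      (A.mulVec x) (Set.Ici 0) 0 := hF.hasDerivWithinAt
  have h2 : HasDerivWithinAt (fun t : ℝ => (exp (t • A)).mulVec x)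
      0 (Set.Ici 0) 0 := by
    have hc : HasDerivWithinAt (fun _ : ℝ => x) 0 (Set.Ici (0:ℝ)) 0 :=
      (hasDerivWithinAt_const 0 _ x)
    exact hc.congr (fun y hy => h y hy) (h 0 le_rfl)
  exact (uniqueDiffOn_Ici (0:ℝ) 0 Set.self_mem_Ici).eq_deriv _ h1 h2

/-- A measure-preserving continuous map sends the measure support into itself. -/
lemma measureSupport_mapsTo {α : Type*} [TopologicalSpace α] [MeasurableSpace α]
    [BorelSpace α] (μ : Measure α) (f : α → α) (hf : Continuous f)
    (hmap : Measure.map f μ = μ) :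
    Set.MapsTo f (measureSupport μ) (measureSupport μ) := by
  intro x hx U hU
  obtain ⟨V, hVU, hVopen, hfxV⟩ := mem_nhds_iff.mp hU
  have hVm : MeasurableSet V := hVopen.measurableSet
  have : μ V = μ (f ⁻¹' V) := by
    conv_lhs => rw [← hmap]
    exact Measure.map_apply hf.measurable hVm
  have hpre : f ⁻¹' V ∈ nhds x :=
    hf.continuousAt.preimage_mem_nhds (hVopen.mem_nhds hfxV)
  calc (0 : ENNReal) < μ (f ⁻¹' V) := hx _ hpre
    _ = μ V := this.symm
    _ ≤ μ U := measure_mono hVU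

/-- The complement of the measure support is null (second countable space). -/
lemma measure_compl_measureSupport {α : Type*} [TopologicalSpace α]
    [SecondCountableTopology α] [MeasurableSpace α] (μ : Measure α) :
    μ (measureSupport μ)ᶜ = 0 := by
  apply measure_null_of_locally_null
  intro x hx
  simp only [measureSupport, Set.mem_compl_iff, Set.mem_setOf_eq, not_forall] at hx
  obtain ⟨U, hU, hUpos⟩ := hx
  exact ⟨U, nhdsWithin_le_nhds hU, by simpa using hUpos⟩

end aux

/-- A finitely supported probability measure is not auto-rotationally invariant
(only `A = 0` makes all `exp (t • A)` preserve it) if and only if its support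
spans `ℝᵈ`. -/
theorem discrete_auto_rotate (d : ℕ) (hd : 1 ≤ d)
    (μ : Measure (Fin d → ℝ)) [IsProbabilityMeasure μ]
    (S : Set (Fin d → ℝ)) (hfin : S.Finite) (hsupp : measureSupport μ = S) :
    (∀ A : Matrix (Fin d) (Fin d) ℝ,
        (∀ t : ℝ, 0 ≤ t → Measure.map (fun x => (exp (t • A)).mulVec x) μ = μ) →
        A = 0) ↔
      Submodule.span ℝ S = ⊤ := by
  constructor
  · -- (i) → (ii): contrapositive, build a nonzero A fixing the span of S.
    intro hA
    by_contra hspan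
    have hlt : Submodule.span ℝ S < ⊤ := lt_top_iff_ne_top.mpr hspan
    obtain ⟨φ, hφ, hφbot⟩ :=
      Submodule.exists_dual_map_eq_bot_of_lt_top hlt inferInstance
    obtain ⟨y, hy⟩ : ∃ y, φ y ≠ 0 := by
      by_contra hcon
      push_neg at hcon
      exact hφ (LinearMap.ext fun z => hcon z)
    set w : Fin d → ℝ := fun _ => 1 with hw
    have hwne : w ≠ 0 := by
      intro hww
      have := congrFun hww ⟨0, hd⟩
      simp [hw] at this
    set L : (Fin d → ℝ) →ₗ[ℝ] (Fin d → ℝ) := φ.smulRight w with hL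
    set A : Matrix (Fin d) (Fin d) ℝ := LinearMap.toMatrix' L with hAdef
    have hAmul : ∀ z, A.mulVec z = L z := by
      intro z
      rw [hAdef, ← Matrix.toLin'_apply, Matrix.toLin'_toMatrix']
    have hAfix : ∀ x ∈ S, A.mulVec x = 0 := by
      intro x hx
      have hxspan : x ∈ Submodule.span ℝ S := Submodule.subset_span hx
      have : φ x ∈ Submodule.map φ (Submodule.span ℝ S) :=
        Submodule.mem_map_of_mem hxspan
      rw [hφbot] at this
      have hφx : φ x = 0 := this
      rw [hAmul, hL]
      simp [LinearMap.smulRight_apply, hφx]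
    have hmap : ∀ t : ℝ, 0 ≤ t →
        Measure.map (fun x => (exp (t • A)).mulVec x) μ = μ := by
      intro t _
      have hnull : μ Sᶜ = 0 := by
        rw [← hsupp]; exact measure_compl_measureSupport μ
      have hae : (fun x => (exp (t • A)).mulVec x) =ᵐ[μ] id := by
        refine measure_mono_null ?_ hnull
        intro z hz
        simp only [Set.mem_setOf_eq] at hz
        intro hzS
        apply hz
        have : (t • A).mulVec z = 0 := by
          rw [Matrix.smul_mulVec, hAfix z hzS, smul_zero]
        exact exp_mulVec_fixed _ _ this
      rw [Measure.map_congr hae, Measure.map_id]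
    have hA0 : A = 0 := hA A hmap
    have hLy : L y = 0 := by rw [← hAmul y, hA0, Matrix.zero_mulVec]
    rw [hL] at hLy
    simp only [LinearMap.smulRight_apply] at hLy
    rcases smul_eq_zero.mp hLy with h | h
    · exact hy h
    · exact hwne h
  · -- (ii) → (i)
    intro hspan A hA
    -- every point of S is fixed by exp (t • A) for t ≥ 0
    have hfix : ∀ x ∈ S, ∀ t : ℝ, 0 ≤ t → (exp (t • A)).mulVec x = x := by
      intro x hxS
      -- the flow maps S into S
      have hmapsto : ∀ t : ℝ, 0 ≤ t →
          Set.MapsTo (fun z => (exp (t • A)).mulVec z) S S := by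
        intro t ht
        rw [← hsupp]
        apply measureSupport_mapsTo μ _ ?_ (hA t ht)
        exact (Matrix.mulVecLin (exp (t • A))).continuous_of_finiteDimensional
      -- the curve t ↦ exp (t • A) x is continuous
      have hc : Continuous fun t : ℝ => (exp (t • A)).mulVec x := by
        letI : SeminormedRing (Matrix (Fin d) (Fin d) ℝ) := Matrix.linftyOpSemiNormedRing
        letI : NormedRing (Matrix (Fin d) (Fin d) ℝ) := Matrix.linftyOpNormedRing
        letI : NormedAlgebra ℝ (Matrix (Fin d) (Fin d) ℝ) := Matrix.linftyOpNormedAlgebra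
        letI : CompleteSpace (Matrix (Fin d) (Fin d) ℝ) := FiniteDimensional.complete ℝ _
        have hexp : Continuous fun t : ℝ => exp (t • A) := by
          rw [continuous_iff_continuousAt]
          intro t
          exact (hasDerivAt_exp_smul_const (𝕂 := ℝ) A t).continuousAt
        let ev : Matrix (Fin d) (Fin d) ℝ →ₗ[ℝ] (Fin d → ℝ) :=
          { toFun := fun M => M.mulVec x
            map_add' := fun M N => Matrix.add_mulVec M N x
            map_smul' := fun c M => Matrix.smul_mulVec c M x }
        exact ev.continuous_of_finiteDimensional.comp hexp
      have hc0 : (exp ((0:ℝ) • A)).mulVec x = x := by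
        rw [zero_smul, exp_zero, Matrix.one_mulVec]
      -- clopen argument on Ici 0
      haveI : PreconnectedSpace (Set.Ici (0:ℝ)) :=
        Subtype.preconnectedSpace isPreconnected_Ici
      set c : Set.Ici (0:ℝ) → (Fin d → ℝ) :=
        (fun t : ℝ => (exp (t • A)).mulVec x) ∘ Subtype.val with hcdef
      have hccont : Continuous c := hc.comp continuous_subtype_val
      have hcS : ∀ t, c t ∈ S := fun t => hmapsto t.1 t.2 hxS
      have hT : IsClopen {t : Set.Ici (0:ℝ) | c t = x} := by
        constructor
        · have : {t : Set.Ici (0:ℝ) | c t = x} = c ⁻¹' {x} := rfl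
          rw [this]
          exact isClosed_singleton.preimage hccont
        · have heq : {t : Set.Ici (0:ℝ) | c t = x} = c ⁻¹' (S \ {x})ᶜ := by
            ext t
            simp only [Set.mem_setOf_eq, Set.mem_preimage, Set.mem_compl_iff,
              Set.mem_diff, Set.mem_singleton_iff]
            constructor
            · intro h hcon; exact hcon.2 h
            · intro h
              by_contra hne
              exact h ⟨hcS t, hne⟩
          rw [heq]
          have hclosed : IsClosed (S \ {x}) := (hfin.diff (t := {x})).isClosed
          exact hclosed.isOpen_compl.preimage hccont
      have hTuniv : {t : Set.Ici (0:ℝ) | c t = x} = Set.univ := by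
        apply hT.eq_univ
        exact ⟨⟨0, Set.self_mem_Ici⟩, hc0⟩
      intro t ht
      have : (⟨t, ht⟩ : Set.Ici (0:ℝ)) ∈ {t : Set.Ici (0:ℝ) | c t = x} := by
        rw [hTuniv]; trivial
      exact this
    -- deduce A.mulVec x = 0 for x ∈ S, hence A = 0 by spanning
    have hker : ∀ x ∈ S, A.mulVec x = 0 := fun x hx =>
      mulVec_eq_zero_of_exp_fixed A x (hfix x hx)
    have hkerle : Submodule.span ℝ S ≤ LinearMap.ker A.mulVecLin := by
      rw [Submodule.span_le]
      intro x hx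
      simp only [SetLike.mem_coe, LinearMap.mem_ker, Matrix.mulVecLin_apply]
      exact hker x hx
    rw [hspan, top_le_iff] at hkerle
    have hall : ∀ z, A.mulVec z = 0 := by
      intro z
      have : z ∈ LinearMap.ker A.mulVecLin := hkerle ▸ Submodule.mem_top
      simpa [Matrix.mulVecLin_apply] using this
    ext i j
    have := congrFun (hall (Pi.single j 1)) i
    rw [Matrix.mulVec_single] at this
    simpa using this
end

section
/- Let d ≥ 1, n ≥ 1, Δt > 0, and let r₁, …, rₙ ∈ ℝᵈ be such that Ĥ = (1/(nΔt))·∑ₖ rₖrₖᵀ is positive definite. Then for every symmetric positive definite real d×d matrix H, −(n/2)·log(det H) − (1/(2Δt))·∑ₖ rₖᵀ H⁻¹ rₖ ≤ −(n/2)·log(det Ĥ) − (1/(2Δt))·∑ₖ rₖᵀ Ĥ⁻¹ rₖ, i.e. Ĥ maximizes the Gaussian log-likelihood in the diffusion matrix over all symmetric positive definite H. -/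
open Matrix


lemma trace_eq_sum_eigs {d : ℕ} {M : Matrix (Fin d) (Fin d) ℝ} (hM : M.IsHermitian) :
    M.trace = ∑ i, hM.eigenvalues i := by
  rw [hM.trace_eq_sum_eigenvalues]
  simp

lemma log_det_le {d : ℕ} {M : Matrix (Fin d) (Fin d) ℝ} (hM : M.PosSemidef)
    (hdet : 0 < M.det) : Real.log M.det ≤ M.trace - d := by
  have hdeteq : M.det = ∏ i, hM.1.eigenvalues i := by
    simpa using hM.1.det_eq_prod_eigenvalues
  have hne : ∀ i ∈ Finset.univ, hM.1.eigenvalues i ≠ 0 := by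
    rw [hdeteq] at hdet
    exact fun i _ => Finset.prod_ne_zero_iff.mp hdet.ne' i (Finset.mem_univ i)
  have hpos : ∀ i, 0 < hM.1.eigenvalues i := fun i =>
    lt_of_le_of_ne (hM.eigenvalues_nonneg i) (Ne.symm (hne i (Finset.mem_univ i)))
  rw [hdeteq, Real.log_prod hne, trace_eq_sum_eigs hM.1]
  have : ∑ i, Real.log (hM.1.eigenvalues i) ≤ ∑ i, (hM.1.eigenvalues i - 1) :=
    Finset.sum_le_sum fun i _ => Real.log_le_sub_one_of_pos (hpos i)
  simpa [Finset.sum_sub_distrib] using this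

lemma trace_mul_vecMulVec {d : ℕ} (A : Matrix (Fin d) (Fin d) ℝ) (x : Fin d → ℝ) :
    (A * vecMulVec x x).trace = x ⬝ᵥ A.mulVec x := by
  simp only [Matrix.trace, Matrix.diag_apply, Matrix.mul_apply, vecMulVec_apply,
    dotProduct, Matrix.mulVec, Finset.mul_sum]
  exact Finset.sum_congr rfl fun i _ => Finset.sum_congr rfl fun j _ => by ring

/-- The closed-form diffusion estimator `Ĥ = (1/(nΔt)) ∑ rₖ rₖᵀ` maximizes the
Gaussian log-likelihood `H ↦ −(n/2)·log det H − (1/(2Δt)) ∑ₖ rₖᵀ H⁻¹ rₖ` over all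
symmetric positive definite matrices `H`. -/
theorem diffusion_mle_maximizes (d n : ℕ) (hd : 1 ≤ d) (hn : 1 ≤ n)
    (Δt : ℝ) (hΔt : 0 < Δt) (r : Fin n → (Fin d → ℝ))
    (Hhat : Matrix (Fin d) (Fin d) ℝ)
    (hHhat : Hhat = (1 / (n * Δt)) • ∑ k, vecMulVec (r k) (r k))
    (hpos : Hhat.PosDef) :
    ∀ H : Matrix (Fin d) (Fin d) ℝ, H.PosDef →
      -(n / 2 : ℝ) * Real.log H.det - (1 / (2 * Δt)) * ∑ k, r k ⬝ᵥ H⁻¹.mulVec (r k)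
        ≤ -(n / 2 : ℝ) * Real.log Hhat.det
            - (1 / (2 * Δt)) * ∑ k, r k ⬝ᵥ Hhat⁻¹.mulVec (r k) := by
  intro H hH
  have hn0 : (0:ℝ) < (n : ℝ) := by exact_mod_cast Nat.lt_of_lt_of_le Nat.zero_lt_one hn
  have hnΔt : (0:ℝ) < (n : ℝ) * Δt := by positivity
  set S : Matrix (Fin d) (Fin d) ℝ := ∑ k, vecMulVec (r k) (r k) with hSdef
  have hS : S = ((n : ℝ) * Δt) • Hhat := by
    rw [hHhat, smul_smul, mul_one_div, div_self hnΔt.ne', one_smul]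
  -- sums as traces
  have key : ∀ A : Matrix (Fin d) (Fin d) ℝ,
      ∑ k, r k ⬝ᵥ A.mulVec (r k) = ((n:ℝ) * Δt) * (A * Hhat).trace := by
    intro A
    have : (A * S).trace = ∑ k, r k ⬝ᵥ A.mulVec (r k) := by
      rw [hSdef, Matrix.mul_sum, Matrix.trace_sum]
      exact Finset.sum_congr rfl fun k _ => trace_mul_vecMulVec A (r k)
    rw [← this, hS, Matrix.mul_smul, Matrix.trace_smul, smul_eq_mul]
  have hHhatinv : (Hhat⁻¹ * Hhat).trace = (d : ℝ) := by
    rw [Matrix.nonsing_inv_mul Hhat hpos.det_pos.ne'.isUnit, Matrix.trace_one]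
    simp
  -- the matrix M = √Ĥ H⁻¹ √Ĥ
  set B : Matrix (Fin d) (Fin d) ℝ := (open MatrixOrder in CFC.sqrt Hhat) with hBdef
  have hB2 : B * B = Hhat := by open MatrixOrder in exact CFC.sqrt_mul_sqrt_self Hhat hpos.posSemidef.nonneg
  have hBH : Bᴴ = B := by open MatrixOrder in exact (CFC.sqrt_nonneg Hhat).posSemidef.1
  have hMps : (B * H⁻¹ * B).PosSemidef := by
    have := (hH.inv.posSemidef).conjTranspose_mul_mul_same B
    rwa [hBH] at this
  have hdetB : B.det * B.det = Hhat.det := by rw [← Matrix.det_mul, hB2]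
  have hdetM : (B * H⁻¹ * B).det = Hhat.det / H.det := by
    rw [Matrix.det_mul, Matrix.det_mul, Matrix.det_nonsing_inv, Ring.inverse_eq_inv']
    rw [div_eq_mul_inv, ← hdetB]
    ring
  have hdetMpos : 0 < (B * H⁻¹ * B).det := by
    rw [hdetM]; exact div_pos hpos.det_pos hH.det_pos
  have htrM : (B * H⁻¹ * B).trace = (H⁻¹ * Hhat).trace := by
    rw [Matrix.trace_mul_cycle, hB2, Matrix.trace_mul_comm]
  have hmain := log_det_le hMps hdetMpos
  rw [hdetM, htrM, Real.log_div hpos.det_pos.ne' hH.det_pos.ne'] at hmain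
  -- conclude
  rw [key H⁻¹, key Hhat⁻¹, hHhatinv]
  have h2 : ∀ x : ℝ, (1 / (2 * Δt)) * (((n:ℝ) * Δt) * x) = ((n:ℝ) / 2) * x := by
    intro x; field_simp
  rw [h2, h2]
  nlinarith [mul_le_mul_of_nonneg_left hmain (show (0:ℝ) ≤ (n:ℝ)/2 by positivity)]
end

section
/- Let d, m ≥ 1, let G be a real d×m matrix, Σ = GGᵀ, γ ∈ ℝ, and let A be a real d×d matrix with AΣ + ΣAᵀ = 0. Let μ be a probability measure on ℝᵈ such that for every s ≥ 0 the pushforward of μ under x ↦ exp(sA)·x equals μ. Let Z be the product measure on ℝᵐ with i.i.d. standard Gaussian N(0,1) coordinates, and let ν be the pushforward of Z under w ↦ γ·(G·w). Then for every s ≥ 0, the pushforward of the convolution μ ∗ ν under x ↦ exp(sA)·x equals μ ∗ ν. -/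
open Matrix NormedSpace MeasureTheory ProbabilityTheory

open scoped ENNReal

lemma lintegral_pi_prod {ι : Type*} [Fintype ι] [DecidableEq ι]
    {α : ι → Type*} [∀ i, MeasurableSpace (α i)] [∀ i, Nonempty (α i)]
    (μ : ∀ i, Measure (α i)) [∀ i, SigmaFinite (μ i)]
    (h : ∀ i, α i → ℝ≥0∞) (hh : ∀ i, Measurable (h i)) :
    ∫⁻ x, ∏ i, h i (x i) ∂Measure.pi μ = ∏ i, ∫⁻ y, h i y ∂μ i := by
  have hf : Measurable (fun x : ∀ j, α j => ∏ j, h j (x j)) :=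
    Finset.measurable_prod _ (fun j _ => (hh j).comp (measurable_pi_apply j))
  have key : ∀ s : Finset ι, ∫⋯∫⁻_s, (fun x => ∏ i, h i (x i)) ∂μ
      = fun x => (∏ i ∈ s, ∫⁻ y, h i y ∂μ i) * ∏ i ∈ sᶜ, h i (x i) := by
    intro s
    induction s using Finset.induction with
    | empty => simp
    | @insert i s hi ih =>
      funext x
      rw [MeasureTheory.lmarginal_insert _ hf hi, ih]
      have hisc : i ∈ sᶜ := by simp [hi]
      have hupd : ∀ xi, (∏ j ∈ sᶜ, h j (Function.update x i xi j))
          = h i xi * ∏ j ∈ sᶜ \ {i}, h j (x j) := by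
        intro xi
        rw [Finset.prod_eq_mul_prod_sdiff_singleton_of_mem hisc
          (fun j => h j (Function.update x i xi j))]
        simp only [Function.update_self]
        refine congrArg _ (Finset.prod_congr rfl fun j hj => ?_)
        have hji : j ≠ i := (Finset.mem_sdiff.mp hj).2 ∘ Finset.mem_singleton.mpr
        simp [Function.update_of_ne hji]
      simp only [hupd]
      rw [lintegral_const_mul _ (f := fun xi => h i xi * ∏ j ∈ sᶜ \ {i}, h j (x j)) ((hh i).mul measurable_const)]
      rw [lintegral_mul_const _ (hh i), Finset.prod_insert hi]
      have hcompl : sᶜ \ {i} = (insert i s)ᶜ := by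
        ext j
        simp only [Finset.mem_sdiff, Finset.mem_compl, Finset.mem_singleton,
          Finset.mem_insert]
        tauto
      rw [hcompl]; ring
  have x0 : ∀ i, α i := fun i => Classical.arbitrary _
  rw [MeasureTheory.lintegral_eq_lmarginal_univ x0, key Finset.univ]
  simp

open ProbabilityTheory in
lemma pi_gaussian_eq_withDensity (m : ℕ) :
    Measure.pi (fun _ : Fin m => gaussianReal 0 1)
      = volume.withDensity (fun w : Fin m → ℝ => ∏ i, gaussianPDF 0 1 (w i)) := by
  refine (Measure.pi_eq fun s hs => ?_)
  rw [withDensity_apply _ (MeasurableSet.univ_pi hs),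
    ← lintegral_indicator (MeasurableSet.univ_pi hs)]
  have hind : ∀ x : Fin m → ℝ, (Set.pi Set.univ s).indicator
      (fun w => ∏ i, gaussianPDF 0 1 (w i)) x
      = ∏ i, (s i).indicator (gaussianPDF 0 1) (x i) := by
    intro x
    by_cases hx : x ∈ Set.pi Set.univ s
    · rw [Set.indicator_of_mem hx]
      exact Finset.prod_congr rfl fun i _ =>
        (Set.indicator_of_mem (hx i trivial) _).symm
    · rw [Set.indicator_of_notMem hx]
      have : ∃ j, x j ∉ s j := by
        by_contra hcon
        push_neg at hcon
        exact hx fun j _ => hcon j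
      obtain ⟨j, hj⟩ := this
      exact (Finset.prod_eq_zero (Finset.mem_univ j)
        (by rw [Set.indicator_of_notMem hj])).symm
  simp only [hind]
  rw [show (volume : Measure (Fin m → ℝ)) = Measure.pi (fun _ => volume) from rfl,
    lintegral_pi_prod _ _ (fun i => (measurable_gaussianPDF 0 1).indicator (hs i))]
  refine Finset.prod_congr rfl fun i _ => ?_
  rw [gaussianReal_of_var_ne_zero 0 one_ne_zero, withDensity_apply _ (hs i),
    ← lintegral_indicator (hs i)]

open ProbabilityTheory Matrix in
lemma map_orth_pi_gaussian (m : ℕ) (O : Matrix (Fin m) (Fin m) ℝ)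
    (hO : Oᵀ * O = 1) :
    Measure.map (fun w => O.mulVec w) (Measure.pi fun _ : Fin m => gaussianReal 0 1)
      = Measure.pi fun _ : Fin m => gaussianReal 0 1 := by
  have hdet : O.det ≠ 0 := by
    intro h
    have := congrArg Matrix.det hO
    rw [Matrix.det_mul, Matrix.det_transpose, h] at this
    simp at this
  have habs : |O.det| = 1 := by
    have := congrArg Matrix.det hO
    rw [Matrix.det_mul, Matrix.det_transpose, Matrix.det_one] at this
    nlinarith [abs_nonneg O.det, sq_abs O.det]
  have hvol : Measure.map (Matrix.toLin' O) volume = (volume : Measure (Fin m → ℝ)) := by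
    rw [Real.map_matrix_volume_pi_eq_smul_volume_pi hdet]
    rw [abs_inv, habs]
    simp
  have hmeas : Measurable (fun w : Fin m → ℝ => O.mulVec w) := by
    exact (Matrix.toLin' O).continuous_of_finiteDimensional.measurable
  have hmp : MeasurePreserving (fun w : Fin m → ℝ => O.mulVec w) volume volume := by
    refine ⟨hmeas, ?_⟩
    have : (fun w : Fin m → ℝ => O.mulVec w) = Matrix.toLin' O := by
      funext w; rw [Matrix.toLin'_apply]
    rw [this, hvol]
  -- norm invariance
  have hdot : ∀ x : Fin m → ℝ, (O.mulVec x) ⬝ᵥ (O.mulVec x) = x ⬝ᵥ x := by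
    intro x
    rw [Matrix.dotProduct_mulVec]
    have h1 : O.mulVec x = x ᵥ* Oᵀ := by
      rw [Matrix.vecMul_transpose]
    rw [h1, Matrix.vecMul_vecMul, hO, Matrix.vecMul_one]
  set f : (Fin m → ℝ) → ℝ≥0∞ := fun w => ∏ i, gaussianPDF 0 1 (w i) with hf
  have hfm : Measurable f :=
    Finset.measurable_prod _ fun i _ =>
      (measurable_gaussianPDF 0 1).comp (measurable_pi_apply i)
  have hfT : ∀ x, f (O.mulVec x) = f x := by
    intro x
    have key : ∀ y : Fin m → ℝ, f y
        = ENNReal.ofReal (((Real.sqrt (2 * Real.pi))⁻¹) ^ (m : ℕ)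
            * Real.exp (-(y ⬝ᵥ y) / 2)) := by
      intro y
      rw [hf]
      simp only [gaussianPDF, gaussianPDFReal]
      rw [← ENNReal.ofReal_prod_of_nonneg (fun i _ => by positivity)]
      congr 1
      rw [Finset.prod_mul_distrib, Finset.prod_const, ← Real.exp_sum]
      simp only [NNReal.coe_one, mul_one, sub_zero, dotProduct]
      rw [Finset.card_univ, Fintype.card_fin]
      congr 1
      rw [← Finset.sum_neg_distrib, ← Finset.sum_div]
      exact congrArg Real.exp
        (congrArg (· / 2) (Finset.sum_congr rfl fun i _ => by ring))
    rw [key, key, hdot]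
  rw [pi_gaussian_eq_withDensity]
  ext s hs
  rw [Measure.map_apply hmeas hs, withDensity_apply _ (hmeas hs),
    withDensity_apply _ hs, ← lintegral_indicator (hmeas hs), ← lintegral_indicator hs]
  have hind : ∀ x, ((fun w => O.mulVec w) ⁻¹' s).indicator f x
      = s.indicator f (O.mulVec x) := by
    intro x
    by_cases hx : O.mulVec x ∈ s
    · rw [Set.indicator_of_mem hx, Set.indicator_of_mem (Set.mem_preimage.mpr hx), hfT]
    · rw [Set.indicator_of_notMem hx,
        Set.indicator_of_notMem (fun h => hx (Set.mem_preimage.mp h))]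
  refine (lintegral_congr fun x => hind x).trans ?_
  exact hmp.lintegral_comp (hfm.indicator hs)

lemma semiconj_exp {n : Type*} [Fintype n] [DecidableEq n] (S X Y : Matrix n n ℝ)
    (h : S * X = Y * S) : S * exp X = exp Y * S := by
  letI : SeminormedRing (Matrix n n ℝ) := Matrix.linftyOpSemiNormedRing
  letI : NormedRing (Matrix n n ℝ) := Matrix.linftyOpNormedRing
  letI : NormedAlgebra ℝ (Matrix n n ℝ) := Matrix.linftyOpNormedAlgebra
  have hpow : ∀ k : ℕ, S * X ^ k = Y ^ k * S := by
    intro k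
    induction k with
    | zero => simp
    | succ k ih =>
      rw [pow_succ, ← mul_assoc, ih, mul_assoc, h, ← mul_assoc, ← pow_succ]
  rw [exp_eq_tsum ℝ]
  beta_reduce
  erw [← Summable.tsum_mul_left S (expSeries_summable' (𝕂 := ℝ) X),
    ← Summable.tsum_mul_right S (expSeries_summable' (𝕂 := ℝ) Y)]
  exact tsum_congr fun k => by
    rw [mul_smul_comm, smul_mul_assoc, hpow k]

lemma gram_to_orthogonal (d m : ℕ) (B C : Matrix (Fin d) (Fin m) ℝ)
    (h : B * Bᵀ = C * Cᵀ) :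
    ∃ O : Matrix (Fin m) (Fin m) ℝ, Oᵀ * O = 1 ∧ B = C * O := by
  classical
  set E := EuclideanSpace ℝ (Fin m)
  let eqv : (Fin m → ℝ) ≃ₗ[ℝ] E := (WithLp.linearEquiv 2 ℝ (Fin m → ℝ)).symm
  let φ : (Fin d → ℝ) →ₗ[ℝ] E := eqv.toLinearMap ∘ₗ Bᵀ.mulVecLin
  let ψ : (Fin d → ℝ) →ₗ[ℝ] E := eqv.toLinearMap ∘ₗ Cᵀ.mulVecLin
  have hφ : ∀ x, φ x = eqv (Bᵀ.mulVec x) := fun x => rfl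
  have hψ : ∀ x, ψ x = eqv (Cᵀ.mulVec x) := fun x => rfl
  -- inner products of images
  have hIP : ∀ (M : Matrix (Fin d) (Fin m) ℝ) (x y : Fin d → ℝ),
      (inner ℝ (eqv (Mᵀ.mulVec x)) (eqv (Mᵀ.mulVec y)) : ℝ)
        = (x ᵥ* (M * Mᵀ)) ⬝ᵥ y := by
    intro M x y
    rw [PiLp.inner_apply]
    have : ∀ z : Fin d → ℝ, Mᵀ.mulVec z = z ᵥ* M := by
      intro z
      rw [← Matrix.transpose_transpose M, Matrix.vecMul_transpose,
        Matrix.transpose_transpose]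
    have step : (Mᵀ.mulVec x) ⬝ᵥ (Mᵀ.mulVec y) = (x ᵥ* (M * Mᵀ)) ⬝ᵥ y := by
      rw [Matrix.dotProduct_mulVec, this x, Matrix.vecMul_vecMul]
    rw [← step]
    simp only [dotProduct, RCLike.inner_apply, starRingEnd_apply]
    exact Finset.sum_congr rfl fun i _ => by simp only [star_trivial]; exact mul_comm _ _
  have hnorm : ∀ x, ‖φ x‖ = ‖ψ x‖ := by
    intro x
    rw [norm_eq_sqrt_real_inner, norm_eq_sqrt_real_inner, hφ, hψ, hIP, hIP, h]
  -- right inverse of the range restriction of ψ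
  obtain ⟨σ, hσ⟩ := ψ.rangeRestrict.exists_rightInverse_of_surjective
    (LinearMap.range_eq_top.mpr (LinearMap.surjective_rangeRestrict ψ))
  have hσ' : ∀ y : LinearMap.range ψ, ψ (σ y) = (y : E) := by
    intro y
    have := LinearMap.congr_fun hσ y
    exact congrArg Subtype.val this
  let L0 : LinearMap.range ψ →ₗ[ℝ] E := φ ∘ₗ σ
  have hL0 : ∀ x, L0 (ψ.rangeRestrict x) = φ x := by
    intro x
    have hker : ψ (σ (ψ.rangeRestrict x)) = ψ x := hσ' _
    have : ‖φ (σ (ψ.rangeRestrict x)) - φ x‖ = 0 := by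
      rw [← map_sub, hnorm, map_sub, hker, sub_self, norm_zero]
    have := norm_eq_zero.mp this
    exact sub_eq_zero.mp this
  let L : LinearMap.range ψ →ₗᵢ[ℝ] E :=
    { toLinearMap := L0
      norm_map' := by
        rintro ⟨y, x, rfl⟩
        have : (⟨ψ x, ⟨x, rfl⟩⟩ : LinearMap.range ψ) = ψ.rangeRestrict x := rfl
        rw [this, hL0, hnorm]
        rfl }
  let V := L.extend
  have hV : ∀ x, V (ψ x) = φ x := by
    intro x
    have : V (ψ x) = L (ψ.rangeRestrict x) := L.extend_apply (ψ.rangeRestrict x)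
    rw [this]
    exact hL0 x
  -- the matrix of V
  let M : Matrix (Fin m) (Fin m) ℝ := LinearMap.toMatrix'
    ((WithLp.linearEquiv 2 ℝ (Fin m → ℝ)).toLinearMap ∘ₗ V.toLinearMap ∘ₗ eqv.toLinearMap)
  have hM : ∀ x : Fin m → ℝ, M.mulVec x = (WithLp.linearEquiv 2 ℝ (Fin m → ℝ)) (V (eqv x)) := by
    intro x
    rw [← Matrix.toLin'_apply, Matrix.toLin'_toMatrix']
    rfl
  -- V preserves inner products ⇒ MᵀM = 1
  have hMM : Mᵀ * M = 1 := by
    ext i j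
    have hcol : ∀ j : Fin m, (fun k => M k j) = M.mulVec (Pi.single j 1) := by
      intro j; funext k
      rw [Matrix.mulVec_single]
      simp
    have : (Mᵀ * M) i j = (fun k => M k i) ⬝ᵥ (fun k => M k j) := by
      simp [Matrix.mul_apply, dotProduct, Matrix.transpose_apply]
    rw [this, hcol i, hcol j]
    have hinner : ∀ u w : Fin m → ℝ,
        (M.mulVec u) ⬝ᵥ (M.mulVec w) = (inner ℝ (eqv u) (eqv w) : ℝ) := by
      intro u w
      have h1 : (inner ℝ (V (eqv u)) (V (eqv w)) : ℝ) = inner ℝ (eqv u) (eqv w) :=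
        V.inner_map_map _ _
      rw [← h1, PiLp.inner_apply]
      simp only [RCLike.inner_apply, starRingEnd_apply]
      rw [hM, hM]
      exact Finset.sum_congr rfl fun i _ => by simp only [star_trivial]; exact mul_comm _ _
    rw [hinner, PiLp.inner_apply]
    simp only [RCLike.inner_apply, starRingEnd_apply]
    have heqv : ∀ (y : Fin m → ℝ) (k : Fin m), eqv y k = y k := fun _ _ => rfl
    simp only [heqv]
    by_cases hij : i = j
    · subst hij
      simp [Pi.single_apply, Matrix.one_apply]
    · simp [Pi.single_apply, Matrix.one_apply, hij, Ne.symm hij]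
  refine ⟨Mᵀ, ?_, ?_⟩
  · rw [Matrix.transpose_transpose, mul_eq_one_comm.mp hMM]
  · -- B = C * Mᵀ  ⟺  Bᵀ = M * Cᵀ
    have key : Bᵀ = M * Cᵀ := by
      have : ∀ x : Fin d → ℝ, Bᵀ.mulVec x = (M * Cᵀ).mulVec x := by
        intro x
        rw [← Matrix.mulVec_mulVec, hM]
        have : (eqv (Cᵀ.mulVec x)) = ψ x := (hψ x).symm
        have h2 : V (eqv (Cᵀ.mulVec x)) = φ x := by rw [this, hV]
        rw [h2]
        rfl
      ext i j
      have := congrFun (this (Pi.single j 1)) i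
      rw [Matrix.mulVec_single, Matrix.mulVec_single] at this
      simpa using this
    calc B = (Bᵀ)ᵀ := by rw [Matrix.transpose_transpose]
    _ = (M * Cᵀ)ᵀ := by rw [key]
    _ = C * Mᵀ := by rw [Matrix.transpose_mul, Matrix.transpose_transpose]

open NormedSpace in
lemma exp_conj_sigma (d : ℕ) (S A : Matrix (Fin d) (Fin d) ℝ)
    (hA : A * S + S * Aᵀ = 0) (s : ℝ) :
    exp (s • A) * S * (exp (s • A))ᵀ = S := by
  have h1 : S * Aᵀ = -(A * S) := eq_neg_of_add_eq_zero_right hA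
  have hsemi : S * (s • Aᵀ) = (-(s • A)) * S := by
    rw [mul_smul_comm, h1, neg_mul, smul_mul_assoc, smul_neg]
  have hes : S * exp (s • Aᵀ) = exp (-(s • A)) * S :=
    semiconj_exp S _ _ hsemi
  have htr : (exp (s • A))ᵀ = exp (s • Aᵀ) := by
    rw [← Matrix.exp_transpose, Matrix.transpose_smul]
  have hinv : exp (s • A) * exp (-(s • A)) = 1 := by
    rw [← Matrix.exp_add_of_commute _ _ ((Commute.refl (s • A)).neg_right),
      add_neg_cancel]
    letI : SeminormedRing (Matrix (Fin d) (Fin d) ℝ) := Matrix.linftyOpSemiNormedRing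
    letI : NormedRing (Matrix (Fin d) (Fin d) ℝ) := Matrix.linftyOpNormedRing
    letI : NormedAlgebra ℝ (Matrix (Fin d) (Fin d) ℝ) := Matrix.linftyOpNormedAlgebra
    exact exp_zero
  rw [htr, mul_assoc, hes, ← mul_assoc, hinv, one_mul]

open Matrix NormedSpace ProbabilityTheory

/-- Conservation of Σ-invariance: if a probability measure `μ` is invariant under
the Σ-generalized rotations `exp (s • A)` (with `Σ = G Gᵀ`, `A Σ + Σ Aᵀ = 0`), and
`ν` is the centered Gaussian law of `w ↦ γ • G·w` with `w` i.i.d. standard Gaussian,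
then the convolution `μ ∗ ν` is invariant under the same rotations. -/
theorem conservation_of_sigma_invariance (d m : ℕ) (hd : 1 ≤ d) (hm : 1 ≤ m)
    (G : Matrix (Fin d) (Fin m) ℝ) (γ : ℝ) (A : Matrix (Fin d) (Fin d) ℝ)
    (hA : A * (G * Gᵀ) + (G * Gᵀ) * Aᵀ = 0)
    (μ : Measure (Fin d → ℝ)) [IsProbabilityMeasure μ]
    (hμ : ∀ s : ℝ, 0 ≤ s →
      Measure.map (fun x => (exp (s • A)).mulVec x) μ = μ)
    (ν : Measure (Fin d → ℝ))
    (hν : ν = Measure.map (fun w : Fin m → ℝ => γ • G.mulVec w)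
          (Measure.pi fun _ : Fin m => gaussianReal 0 1)) :
    ∀ s : ℝ, 0 ≤ s →
      Measure.map (fun x => (exp (s • A)).mulVec x) (Measure.conv μ ν)
        = Measure.conv μ ν := by
  intro s hs
  set Es := exp (s • A) with hEs
  set Z : Measure (Fin m → ℝ) := Measure.pi fun _ : Fin m => gaussianReal 0 1 with hZ
  -- measurability facts
  have hL : Measurable (fun x : Fin d → ℝ => Es.mulVec x) :=
    Es.mulVecLin.continuous_of_finiteDimensional.measurable
  have hγG : Measurable (fun w : Fin m → ℝ => γ • G.mulVec w) :=
    (G.mulVecLin.continuous_of_finiteDimensional.measurable).const_smul γ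
  haveI : IsProbabilityMeasure ν := by
    rw [hν]; exact Measure.isProbabilityMeasure_map hγG.aemeasurable
  -- invariance of ν
  have hconj : Es * (G * Gᵀ) * Esᵀ = G * Gᵀ := exp_conj_sigma d (G * Gᵀ) A hA s
  have hgram : (Es * G) * (Es * G)ᵀ = G * Gᵀ := by
    rw [Matrix.transpose_mul, ← Matrix.mul_assoc, Matrix.mul_assoc Es G Gᵀ, hconj]
  obtain ⟨O, hO, hBC⟩ := gram_to_orthogonal d m (Es * G) G hgram
  have hOmeas : Measurable (fun w : Fin m → ℝ => O.mulVec w) :=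
    O.mulVecLin.continuous_of_finiteDimensional.measurable
  have hmapν : Measure.map (fun x => Es.mulVec x) ν = ν := by
    rw [hν, Measure.map_map hL hγG]
    have hcomp : (fun x => Es.mulVec x) ∘ (fun w : Fin m → ℝ => γ • G.mulVec w)
        = (fun w : Fin m → ℝ => γ • G.mulVec w) ∘ (fun w => O.mulVec w) := by
      funext w
      simp only [Function.comp_apply]
      rw [Matrix.mulVec_smul, Matrix.mulVec_mulVec, hBC, ← Matrix.mulVec_mulVec]
    rw [hcomp, ← Measure.map_map hγG hOmeas, map_orth_pi_gaussian m O hO]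
  -- push the map through the convolution
  have hadd : Measurable (fun p : (Fin d → ℝ) × (Fin d → ℝ) => p.1 + p.2) :=
    measurable_fst.add measurable_snd
  have hconv : Measure.conv μ ν
      = Measure.map (fun p : (Fin d → ℝ) × (Fin d → ℝ) => p.1 + p.2) (μ.prod ν) := rfl
  rw [hconv, Measure.map_map hL hadd]
  have hcomp2 : (fun x => Es.mulVec x) ∘ (fun p : (Fin d → ℝ) × (Fin d → ℝ) => p.1 + p.2)
      = (fun p : (Fin d → ℝ) × (Fin d → ℝ) => p.1 + p.2)
        ∘ (Prod.map (fun x => Es.mulVec x) (fun x => Es.mulVec x)) := by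
    funext p
    simp only [Function.comp_apply, Prod.map_apply, Prod.map_fst, Prod.map_snd]
    rw [Matrix.mulVec_add]
  rw [hcomp2, ← Measure.map_map hadd (hL.prodMap hL),
    ← Measure.map_prod_map _ _ hL hL, hμ s hs, hmapν]
end
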